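/- Let H_x and H_z be real Hilbert spaces, let S : H_x → H_z be a bounded operator, let S_z be a bounded positive self-adjoint operator on H_z, and let μ, λ > 0. Define T_{μ,λ} := S*(S_z + μI)⁻¹S + λI on H_x. Then T_{μ,λ} is boundedly invertible and ‖T_{μ,λ}⁻¹ S* (S_z + μI)⁻¹‖ ≤ 1/(2√(λμ)), where ‖·‖ is the operator norm. -/
import Mathlib


open ContinuousLinearMap RealInnerProductSpace

section Aux

variable {Hx Hz : Type*} [NormedAddCommGroup Hx] [InnerProductSpace ℝ Hx] [CompleteSpace Hx]
    [NormedAddCommGroup Hz] [InnerProductSpace ℝ Hz] [CompleteSpace Hz]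

/-- Cauchy–Schwarz for a symmetric nonnegative bilinear form coming from an operator. -/
lemma cs_aux (B : Hz →L[ℝ] Hz) (hsymm : ∀ u v : Hz, ⟪B u, v⟫ = ⟪u, B v⟫)
    (hpos : ∀ u : Hz, 0 ≤ ⟪B u, u⟫) (u v : Hz) :
    ⟪B u, v⟫ ≤ Real.sqrt ⟪B u, u⟫ * Real.sqrt ⟪B v, v⟫ := by
  have key : ∀ t : ℝ, 0 ≤ ⟪B v, v⟫ * (t * t) + (2 * ⟪B u, v⟫) * t + ⟪B u, u⟫ := by
    intro t
    have h0 := hpos (u + t • v)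
    have h1 : ⟪B (u + t • v), u + t • v⟫
        = ⟪B v, v⟫ * (t * t) + (2 * ⟪B u, v⟫) * t + ⟪B u, u⟫ := by
      have h2 : ⟪B u, v⟫ = ⟪B v, u⟫ := by
        rw [hsymm u v, real_inner_comm]
      simp only [map_add, map_smul, inner_add_left, inner_add_right,
        real_inner_smul_left, real_inner_smul_right]
      rw [h2]
      ring
    linarith [h1 ▸ h0]
  have hd := discrim_le_zero key
  rw [discrim] at hd
  have h3 : (⟪B u, v⟫) ^ 2 ≤ ⟪B u, u⟫ * ⟪B v, v⟫ := by nlinarith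
  calc ⟪B u, v⟫ ≤ |⟪B u, v⟫| := le_abs_self _
    _ = Real.sqrt ((⟪B u, v⟫) ^ 2) := (Real.sqrt_sq_eq_abs _).symm
    _ ≤ Real.sqrt (⟪B u, u⟫ * ⟪B v, v⟫) := Real.sqrt_le_sqrt h3
    _ = Real.sqrt ⟪B u, u⟫ * Real.sqrt ⟪B v, v⟫ := Real.sqrt_mul (hpos u) _

end Aux

set_option maxHeartbeats 1000000 in
theorem preconditioned_inverse_bound
    {Hx Hz : Type*} [NormedAddCommGroup Hx] [InnerProductSpace ℝ Hx] [CompleteSpace Hx]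
    [NormedAddCommGroup Hz] [InnerProductSpace ℝ Hz] [CompleteSpace Hz]
    (S : Hx →L[ℝ] Hz) (Sz : Hz →L[ℝ] Hz) (hSz : Sz.IsPositive)
    (μ lam : ℝ) (hμ : 0 < μ) (hlam : 0 < lam) :
    IsUnit (ContinuousLinearMap.adjoint S ∘L
        Ring.inverse (Sz + μ • (1 : Hz →L[ℝ] Hz)) ∘L S + lam • (1 : Hx →L[ℝ] Hx)) ∧
    ‖Ring.inverse (ContinuousLinearMap.adjoint S ∘L
          Ring.inverse (Sz + μ • (1 : Hz →L[ℝ] Hz)) ∘L S + lam • (1 : Hx →L[ℝ] Hx)) ∘L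
        ContinuousLinearMap.adjoint S ∘L
        Ring.inverse (Sz + μ • (1 : Hz →L[ℝ] Hz))‖
      ≤ 1 / (2 * Real.sqrt (lam * μ)) := by
  -- notation
  set A : Hz →L[ℝ] Hz := Sz + μ • (1 : Hz →L[ℝ] Hz) with hA_def
  -- basic facts about Sz
  have hSz_sym : ∀ u v : Hz, ⟪Sz u, v⟫ = ⟪u, Sz v⟫ := fun u v =>
    (isSelfAdjoint_iff_isSymmetric.mp hSz.isSelfAdjoint) u v
  have hSz_nonneg : ∀ u : Hz, 0 ≤ ⟪Sz u, u⟫ := fun u => by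
    have := hSz.inner_nonneg_left u
    simpa using this
  -- A is symmetric and coercive
  have hA_apply : ∀ u : Hz, A u = Sz u + μ • u := fun u => by
    simp [hA_def]
  have hA_sym : ∀ u v : Hz, ⟪A u, v⟫ = ⟪u, A v⟫ := by
    intro u v
    simp only [hA_apply, inner_add_left, inner_add_right, real_inner_smul_left,
      real_inner_smul_right, hSz_sym]
  have hA_coercive : ∀ u : Hz, μ * ‖u‖ ^ 2 ≤ ⟪A u, u⟫ := by
    intro u
    have h1 : ⟪A u, u⟫ = ⟪Sz u, u⟫ + μ * ‖u‖ ^ 2 := by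
      rw [hA_apply]
      rw [inner_add_left, real_inner_smul_left, real_inner_self_eq_norm_sq]
    linarith [hSz_nonneg u]
  -- A is a unit
  have hA_unit : IsUnit A := by
    apply isUnit_of_forall_le_norm_inner_map A (c := ⟨μ, hμ.le⟩) (by exact_mod_cast hμ)
    intro x
    calc ‖x‖ ^ 2 * (⟨μ, hμ.le⟩ : NNReal) = μ * ‖x‖ ^ 2 := by
          simp [mul_comm]
      _ ≤ ⟪A x, x⟫ := hA_coercive x
      _ ≤ ‖⟪A x, x⟫‖ := le_abs_self _
  set B : Hz →L[ℝ] Hz := Ring.inverse A with hB_def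
  have hAB : ∀ z : Hz, A (B z) = z := by
    intro z
    have : A * B = 1 := Ring.mul_inverse_cancel A hA_unit
    have := congrFun (congrArg DFunLike.coe this) z
    simpa [ContinuousLinearMap.mul_apply] using this
  have hBA : ∀ w : Hz, B (A w) = w := by
    intro w
    have : B * A = 1 := Ring.inverse_mul_cancel A hA_unit
    have := congrFun (congrArg DFunLike.coe this) w
    simpa [ContinuousLinearMap.mul_apply] using this
  -- B is symmetric and nonnegative
  have hB_sym : ∀ u v : Hz, ⟪B u, v⟫ = ⟪u, B v⟫ := by
    intro u v
    conv_lhs => rw [← hAB v]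
    rw [← hA_sym, hAB]
  have hB_nonneg : ∀ u : Hz, 0 ≤ ⟪B u, u⟫ := by
    intro u
    have h1 : ⟪B u, u⟫ = ⟪A (B u), B u⟫ := by
      rw [hA_sym, hAB]
    rw [h1]
    exact le_trans (by positivity) (hA_coercive (B u))
  -- bound ⟪B u, u⟫ ≤ ‖u‖²/μ
  have hB_bound : ∀ u : Hz, ⟪B u, u⟫ ≤ ‖u‖ ^ 2 / μ := by
    intro u
    have h1 : ⟪B u, u⟫ = ⟪A (B u), B u⟫ := by
      rw [hA_sym, hAB]
    have h2 : μ * ‖B u‖ ^ 2 ≤ ⟪A (B u), B u⟫ := hA_coercive (B u)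
    have h3 : ⟪A (B u), B u⟫ ≤ ‖u‖ * ‖B u‖ := by
      calc ⟪A (B u), B u⟫ ≤ ‖A (B u)‖ * ‖B u‖ := real_inner_le_norm _ _
        _ = ‖u‖ * ‖B u‖ := by rw [hAB]
    have h4 : μ * ‖B u‖ ≤ ‖u‖ := by
      rcases eq_or_lt_of_le (norm_nonneg (B u)) with h | h
      · rw [← h]; simpa using norm_nonneg u
      · nlinarith
    rw [h1, le_div_iff₀ hμ]
    nlinarith [norm_nonneg (B u), norm_nonneg u]
  -- the operator T
  set T : Hx →L[ℝ] Hx :=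
    ContinuousLinearMap.adjoint S ∘L B ∘L S + lam • (1 : Hx →L[ℝ] Hx) with hT_def
  have hT_apply : ∀ x : Hx, T x = ContinuousLinearMap.adjoint S (B (S x)) + lam • x := by
    intro x; simp [hT_def]
  have hT_inner : ∀ x : Hx, ⟪T x, x⟫ = ⟪B (S x), S x⟫ + lam * ‖x‖ ^ 2 := by
    intro x
    rw [hT_apply, inner_add_left, ContinuousLinearMap.adjoint_inner_left,
      real_inner_smul_left, real_inner_self_eq_norm_sq]
  have hT_unit : IsUnit T := by
    apply isUnit_of_forall_le_norm_inner_map T (c := ⟨lam, hlam.le⟩) (by exact_mod_cast hlam)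
    intro x
    calc ‖x‖ ^ 2 * (⟨lam, hlam.le⟩ : NNReal) = lam * ‖x‖ ^ 2 := by simp [mul_comm]
      _ ≤ ⟪T x, x⟫ := by rw [hT_inner]; linarith [hB_nonneg (S x)]
      _ ≤ ‖⟪T x, x⟫‖ := le_abs_self _
  refine ⟨hT_unit, ?_⟩
  set Tinv : Hx →L[ℝ] Hx := Ring.inverse T with hTinv_def
  have hTTinv : ∀ x : Hx, T (Tinv x) = x := by
    intro x
    have : T * Tinv = 1 := Ring.mul_inverse_cancel T hT_unit
    have := congrFun (congrArg DFunLike.coe this) x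
    simpa [ContinuousLinearMap.mul_apply] using this
  have hs : (0:ℝ) < Real.sqrt (lam * μ) := Real.sqrt_pos.mpr (mul_pos hlam hμ)
  apply ContinuousLinearMap.opNorm_le_bound _ (by positivity)
  intro z
  simp only [ContinuousLinearMap.comp_apply]
  set x : Hx := Tinv (ContinuousLinearMap.adjoint S (B z)) with hx_def
  have hTx : T x = ContinuousLinearMap.adjoint S (B z) := hTTinv _
  -- key inequality
  have key : ⟪B (S x), S x⟫ + lam * ‖x‖ ^ 2
      ≤ Real.sqrt ⟪B z, z⟫ * Real.sqrt ⟪B (S x), S x⟫ := by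
    have h1 : ⟪T x, x⟫ = ⟪B z, S x⟫ := by
      rw [hTx, ContinuousLinearMap.adjoint_inner_left]
    rw [← hT_inner, h1]
    exact cs_aux B hB_sym hB_nonneg z (S x)
  -- bound √μ · √⟪Bz,z⟫ ≤ ‖z‖
  have hq : Real.sqrt μ * Real.sqrt ⟪B z, z⟫ ≤ ‖z‖ := by
    rw [← Real.sqrt_mul hμ.le]
    calc Real.sqrt (μ * ⟪B z, z⟫) ≤ Real.sqrt (‖z‖ ^ 2) := by
          apply Real.sqrt_le_sqrt
          have := hB_bound z
          rw [le_div_iff₀ hμ] at this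
          linarith
      _ = ‖z‖ := Real.sqrt_sq (norm_nonneg z)
  set sμ : ℝ := Real.sqrt μ with hsμ_def
  set sp : ℝ := Real.sqrt ⟪B (S x), S x⟫ with hsp_def
  set sq' : ℝ := Real.sqrt ⟪B z, z⟫ with hsq_def
  have hsμ_pos : 0 < sμ := Real.sqrt_pos.mpr hμ
  have hsμ_sq : sμ * sμ = μ := Real.mul_self_sqrt hμ.le
  have hsp_sq : sp * sp = ⟪B (S x), S x⟫ := Real.mul_self_sqrt (hB_nonneg _)
  have hsp_nonneg : 0 ≤ sp := Real.sqrt_nonneg _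
  have hsq_nonneg : 0 ≤ sq' := Real.sqrt_nonneg _
  -- combine: sμ * (p + lam‖x‖²) ≤ ‖z‖ * sp
  have hkey2 : sμ * (⟪B (S x), S x⟫ + lam * ‖x‖ ^ 2) ≤ ‖z‖ * sp := by
    calc sμ * (⟪B (S x), S x⟫ + lam * ‖x‖ ^ 2) ≤ sμ * (sq' * sp) := by
          apply mul_le_mul_of_nonneg_left key hsμ_pos.le
      _ = (sμ * sq') * sp := by ring
      _ ≤ ‖z‖ * sp := mul_le_mul_of_nonneg_right hq hsp_nonneg
  have hfinal : lam * ‖x‖ ^ 2 * (4 * μ) ≤ ‖z‖ ^ 2 := by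
    have hkey4 : 4 * μ * ⟪B (S x), S x⟫ + 4 * μ * (lam * ‖x‖ ^ 2) ≤ 4 * sμ * (‖z‖ * sp) := by
      have h8 := mul_le_mul_of_nonneg_left hkey2 (by positivity : (0:ℝ) ≤ 4 * sμ)
      calc 4 * μ * ⟪B (S x), S x⟫ + 4 * μ * (lam * ‖x‖ ^ 2)
          = 4 * sμ * (sμ * (⟪B (S x), S x⟫ + lam * ‖x‖ ^ 2)) := by rw [← hsμ_sq]; ring
        _ ≤ 4 * sμ * (‖z‖ * sp) := h8
    have h7 : 0 ≤ 4 * (sμ * sμ) * (sp * sp) - 4 * sμ * (‖z‖ * sp) + ‖z‖ ^ 2 := by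
      nlinarith [sq_nonneg (2 * sμ * sp - ‖z‖)]
    rw [hsμ_sq, hsp_sq] at h7
    linarith
  -- conclude
  set s : ℝ := Real.sqrt (lam * μ) with hs_def
  have hs_sq : s * s = lam * μ := Real.mul_self_sqrt (mul_pos hlam hμ).le
  have hg2 : ‖x‖ ^ 2 ≤ (1 / (2 * s) * ‖z‖) ^ 2 := by
    have h6 : (1 / (2 * s) * ‖z‖) ^ 2 = ‖z‖ ^ 2 / (4 * (lam * μ)) := by
      rw [mul_pow, div_pow, one_pow, mul_pow,
        show s ^ 2 = lam * μ from by rw [sq]; exact hs_sq]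
      ring
    rw [h6, le_div_iff₀ (by positivity)]
    linarith [hfinal]
  calc ‖x‖ = Real.sqrt (‖x‖ ^ 2) := (Real.sqrt_sq (norm_nonneg x)).symm
    _ ≤ Real.sqrt ((1 / (2 * s) * ‖z‖) ^ 2) := Real.sqrt_le_sqrt hg2
    _ = 1 / (2 * s) * ‖z‖ := Real.sqrt_sq (by positivity)
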